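/- Let f : ℝ → ℝ be three times continuously differentiable on the interval [x − h − h', x], where h > 0 and h' > 0, and suppose |f'''(ξ)| ≤ M for all ξ in [x − h − h', x]. Then the backward one-sided three-point difference formula on the nonuniform stencil satisfies | ( h'(2h + h') f(x) − (h + h')² f(x − h) + h² f(x − h − h') ) / ( h h' (h + h') ) − f'(x) | ≤ M · ( h²(h + h') + h(h + h')² ) / (6 h'). In particular, for mesh steps with bounded ratio h/h' the formula approximates f'(x) with second-order accuracy O((h + h')²). -/

import Mathlib

open scoped Nat
open Set

theorem taylor_mean_remainder_lagrange_right {f : ℝ → ℝ} {a b y : ℝ} {n : ℕ}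
    (hab : a < b) (hay : a ≤ y) (hyb : y < b)
    (hf : ContDiffOn ℝ (n + 1) f (Icc a b)) :
    ∃ c ∈ Ioo y b, f y - taylorWithinEval f n (Icc a b) b y =
      iteratedDerivWithin (n + 1) f (Icc a b) c * (y - b) ^ (n + 1) / (n + 1)! := by
  have unique : UniqueDiffOn ℝ (Icc a b) := uniqueDiffOn_Icc hab
  have hf' : DifferentiableOn ℝ (iteratedDerivWithin n f (Icc a b)) (Ioo a b) :=
    (hf.differentiableOn_iteratedDerivWithin (mod_cast n.lt_succ_self) unique).mono
      Ioo_subset_Icc_self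
  have Fcont : ContinuousOn (fun t => taylorWithinEval f n (Icc a b) t y) (Icc y b) :=
    (continuousOn_taylorWithinEval unique hf.of_succ).mono (Icc_subset_Icc hay le_rfl)
  have Fderiv : ∀ t ∈ Ioo y b, HasDerivAt (fun t => taylorWithinEval f n (Icc a b) t y)
      (((n ! : ℝ)⁻¹ * (y - t) ^ n) • iteratedDerivWithin (n + 1) f (Icc a b) t) t :=
    fun t ht => taylorWithinEval_hasDerivAt_Ioo y hab (Ioo_subset_Ioo hay le_rfl ht)
      hf.of_succ hf'
  have gcont : ContinuousOn (fun t : ℝ => (y - t) ^ (n + 1)) (Icc y b) := by fun_prop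
  have gdiff : ∀ t ∈ Ioo y b, HasDerivAt (fun t : ℝ => (y - t) ^ (n + 1))
      (-(n + 1 : ℝ) * (y - t) ^ n) t := fun t _ => monomial_has_deriv_aux t y n
  rcases exists_ratio_hasDerivAt_eq_ratio_slope _ _ hyb Fcont Fderiv _ _ gcont gdiff with
    ⟨c, hc, h⟩
  refine ⟨c, hc, ?_⟩
  have hyc : (y - c) ^ n ≠ 0 := pow_ne_zero _ (sub_ne_zero.mpr hc.1.ne)
  simp only [sub_self, zero_pow, Ne, Nat.succ_ne_zero, not_false_iff, taylorWithinEval_self,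
    smul_eq_mul] at h
  have key : ((y - b) ^ (n + 1) * iteratedDerivWithin (n + 1) f (Icc a b) c) * (y - c) ^ n
      = ((taylorWithinEval f n (Icc a b) b y - f y) * (-1 + -(n : ℝ)) * n !) * (y - c) ^ n := by
    have hn : (n ! : ℝ) ≠ 0 := by positivity
    field_simp [hn] at h
    linear_combination (y - c) ^ n * h
  have key2 := mul_right_cancel₀ hyc key
  have hfac : ((n + 1)! : ℝ) ≠ 0 := by positivity
  rw [eq_div_iff hfac]
  have hcast : ((n + 1)! : ℝ) = ((n : ℝ) + 1) * n ! := by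
    push_cast [Nat.factorial_succ]; ring
  rw [hcast]
  linear_combination -key2

/-- Truncation-error estimate for the backward one-sided three-point difference
formula on a nonuniform stencil with steps `h`, `h'`: if `f` is three times
continuously differentiable on `[x − h − h', x]` with `|f'''| ≤ M` there, then
the stencil approximates `f'(x)` with the stated error bound. -/
theorem backward_three_point_stencil_error
    (f : ℝ → ℝ) (x h h' M : ℝ) (hh : 0 < h) (hh' : 0 < h')
    (hf : ContDiffOn ℝ 3 f (Set.Icc (x - h - h') x))
    (hM : ∀ ξ ∈ Set.Icc (x - h - h') x,
      |iteratedDerivWithin 3 f (Set.Icc (x - h - h') x) ξ| ≤ M) :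
    |(h' * (2 * h + h') * f x - (h + h') ^ 2 * f (x - h)
        + h ^ 2 * f (x - h - h')) / (h * h' * (h + h'))
      - derivWithin f (Set.Icc (x - h - h') x) x|
      ≤ M * (h ^ 2 * (h + h') + h * (h + h') ^ 2) / (6 * h') := by
  set I := Set.Icc (x - h - h') x with hI
  have hab : x - h - h' < x := by linarith
  have hf' : ContDiffOn ℝ ((2 : ℕ) + 1) f I := by exact_mod_cast hf
  have hP : ∀ y : ℝ, taylorWithinEval f 2 I x y
      = f x + derivWithin f I x * (y - x) + iteratedDerivWithin 2 f I x * (y - x) ^ 2 / 2 := by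
    intro y
    rw [taylor_within_apply]
    simp [Finset.sum_range_succ, iteratedDerivWithin_one, Nat.factorial]
    ring
  obtain ⟨c₁, hc₁, e₁⟩ := taylor_mean_remainder_lagrange_right (n := 2) hab
    (by linarith : x - h - h' ≤ x - h) (by linarith : x - h < x) hf'
  obtain ⟨c₂, hc₂, e₂⟩ := taylor_mean_remainder_lagrange_right (n := 2) hab
    (le_refl (x - h - h')) (by linarith : x - h - h' < x) hf'
  rw [hP] at e₁ e₂
  set B := derivWithin f I x
  set C := iteratedDerivWithin 2 f I x
  set D₁ := iteratedDerivWithin 3 f I c₁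
  set D₂ := iteratedDerivWithin 3 f I c₂
  have hD₁ : |D₁| ≤ M := hM c₁ (Set.Ioo_subset_Icc_self (Set.Ioo_subset_Ioo (by linarith) le_rfl hc₁))
  have hD₂ : |D₂| ≤ M := hM c₂ (Set.Ioo_subset_Icc_self hc₂)
  have hM0 : 0 ≤ M := le_trans (abs_nonneg _) hD₂
  have hfac : ((2 + 1)! : ℝ) = 6 := by norm_num [Nat.factorial]
  rw [hfac] at e₁ e₂
  have hhh : 0 < h + h' := by linarith
  have hpos : 0 < 6 * (h * h' * (h + h')) := by positivity
  have key : (h' * (2 * h + h') * f x - (h + h') ^ 2 * f (x - h)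
        + h ^ 2 * f (x - h - h')) / (h * h' * (h + h')) - B
      = ((h + h') ^ 2 * h ^ 3 * D₁ - h ^ 2 * (h + h') ^ 3 * D₂)
        / (6 * (h * h' * (h + h'))) := by
    have hf1 : f (x - h) = f x + B * (x - h - x) + C * (x - h - x) ^ 2 / 2
        + D₁ * (x - h - x) ^ 3 / 6 := by linarith [e₁]
    have hf2 : f (x - h - h') = f x + B * (x - h - h' - x) + C * (x - h - h' - x) ^ 2 / 2
        + D₂ * (x - h - h' - x) ^ 3 / 6 := by linarith [e₂]
    rw [hf1, hf2]
    field_simp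
    ring
  rw [key, abs_div, abs_of_pos hpos]
  have hnum : |(h + h') ^ 2 * h ^ 3 * D₁ - h ^ 2 * (h + h') ^ 3 * D₂|
      ≤ M * ((h + h') ^ 2 * h ^ 3 + h ^ 2 * (h + h') ^ 3) := by
    calc |(h + h') ^ 2 * h ^ 3 * D₁ - h ^ 2 * (h + h') ^ 3 * D₂|
        ≤ |(h + h') ^ 2 * h ^ 3 * D₁| + |h ^ 2 * (h + h') ^ 3 * D₂| := abs_sub _ _
      _ = (h + h') ^ 2 * h ^ 3 * |D₁| + h ^ 2 * (h + h') ^ 3 * |D₂| := by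
          rw [abs_mul, abs_mul, abs_mul, abs_mul, abs_pow, abs_pow, abs_pow, abs_pow,
            abs_of_pos hh, abs_of_pos hhh]
      _ ≤ (h + h') ^ 2 * h ^ 3 * M + h ^ 2 * (h + h') ^ 3 * M := by gcongr
      _ = M * ((h + h') ^ 2 * h ^ 3 + h ^ 2 * (h + h') ^ 3) := by ring
  calc |(h + h') ^ 2 * h ^ 3 * D₁ - h ^ 2 * (h + h') ^ 3 * D₂| / (6 * (h * h' * (h + h')))
      ≤ M * ((h + h') ^ 2 * h ^ 3 + h ^ 2 * (h + h') ^ 3) / (6 * (h * h' * (h + h'))) := by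
        gcongr
    _ = M * (h ^ 2 * (h + h') + h * (h + h') ^ 2) / (6 * h') := by
        field_simp
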